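/- Let d_1,…,d_n be reals with d_1 = d_n = 1, and for 1 ≤ l, j ≤ n set V_{lj} = Σ_{i=l}^{n} d_{ij}. Then: V_{lj} = 0 if l ≤ j < n; V_{lj} = −d_j·(∏_{k=j+1}^{l−1}(1−d_k)) if l > j; and V_{lj} = 1 if j = n and l ≤ n. -/

import Mathlib

open Finset Matrix

/-- The matrix `D` with entries `d_{ij}`: `0` for `i < j`, `d_i` for `i = j`, and
`-d_j · (∏_{k=j+1}^{i-1} (1 - d_k)) · d_i` for `i > j`. -/
def Dmat (n : ℕ) (d : Fin n → ℝ) : Matrix (Fin n) (Fin n) ℝ :=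
  Matrix.of fun i j =>
    if i < j then 0
    else if i = j then d i
    else -(d j) * (∏ k ∈ Finset.Ioo j i, (1 - d k)) * d i

lemma Dmat_of_gt {n : ℕ} {d : Fin n → ℝ} {i j : Fin n} (h : j < i) :
    Dmat n d i j = -(d j) * (∏ k ∈ Finset.Ioo j i, (1 - d k)) * d i := by
  simp only [Dmat, Matrix.of_apply, if_neg (not_lt_of_gt h), if_neg (Fin.ne_of_gt h)]

lemma Dmat_diag {n : ℕ} {d : Fin n → ℝ} (j : Fin n) : Dmat n d j j = d j := by
  simp only [Dmat, Matrix.of_apply, lt_self_iff_false, if_false, if_true]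

lemma Dmat_of_lt {n : ℕ} {d : Fin n → ℝ} {i j : Fin n} (h : i < j) :
    Dmat n d i j = 0 := by
  simp only [Dmat, Matrix.of_apply, if_pos h]

lemma aux (n : ℕ) (hn : 2 ≤ n) (d : Fin n → ℝ)
    (hdn : d ⟨n - 1, Nat.sub_one_lt (by omega)⟩ = 1) (j : Fin n) :
    ∀ m : ℕ, ∀ l : Fin n, n - 1 - (l : ℕ) ≤ m → j < l →
      ∑ i ∈ Finset.Ici l, Dmat n d i j = -(d j) * ∏ k ∈ Finset.Ioo j l, (1 - d k) := by
  have base : ∀ l : Fin n, (l : ℕ) = n - 1 → j < l →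
      ∑ i ∈ Finset.Ici l, Dmat n d i j = -(d j) * ∏ k ∈ Finset.Ioo j l, (1 - d k) := by
    intro l hl hjl
    have hIci : Finset.Ici l = {l} := by
      ext i
      simp only [Finset.mem_Ici, Finset.mem_singleton, Fin.le_def, Fin.ext_iff]
      have := i.isLt; omega
    have hdl : d l = 1 := by
      have : l = ⟨n - 1, by omega⟩ := Fin.ext hl
      rw [this]; exact hdn
    rw [hIci, Finset.sum_singleton, Dmat_of_gt hjl, hdl, mul_one]
  intro m
  induction m with
  | zero =>
    intro l hm hjl
    exact base l (by have := l.isLt; omega) hjl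
  | succ m ih =>
    intro l hm hjl
    by_cases hl : (l : ℕ) = n - 1
    · exact base l hl hjl
    · have hlt : (l : ℕ) + 1 < n := by have := l.isLt; omega
      set l' : Fin n := ⟨(l : ℕ) + 1, hlt⟩ with hl'
      have hIoi : Finset.Ioi l = Finset.Ici l' := by
        ext i
        simp only [Finset.mem_Ioi, Finset.mem_Ici, Fin.le_def, Fin.lt_def, hl']
        omega
      have hjl' : j < l' := lt_trans hjl (by simp only [Fin.lt_def, hl']; omega)
      rw [Finset.Ici_eq_cons_Ioi, Finset.sum_cons, hIoi,
        ih l' (by simp only [hl']; omega) hjl']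
      have hIoo : Finset.Ioo j l' = insert l (Finset.Ioo j l) := by
        ext i
        simp only [Finset.mem_Ioo, Finset.mem_insert, Fin.lt_def, Fin.ext_iff, hl']
        omega
      rw [hIoo, Finset.prod_insert (by simp only [Finset.mem_Ioo]; exact fun h => absurd h.2 (lt_irrefl l)),
        Dmat_of_gt hjl]
      ring

theorem stmt_1 (n : ℕ) (hn : 2 ≤ n) (d : Fin n → ℝ)
    (hd1 : d ⟨0, by omega⟩ = 1) (hdn : d ⟨n - 1, by omega⟩ = 1)
    (V : Fin n → Fin n → ℝ)
    (hV : ∀ l j : Fin n, V l j = ∑ i ∈ Finset.Ici l, Dmat n d i j) :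
    ∀ l j : Fin n,
      (l ≤ j → (j : ℕ) + 1 < n → V l j = 0) ∧
      (j < l → V l j = -(d j) * ∏ k ∈ Finset.Ioo j l, (1 - d k)) ∧
      ((j : ℕ) + 1 = n → V l j = 1) := by
  intro l j
  have hsub : l ≤ j → ∑ i ∈ Finset.Ici l, Dmat n d i j = ∑ i ∈ Finset.Ici j, Dmat n d i j := by
    intro hlj
    refine (Finset.sum_subset (fun i hi => ?_) (fun i hi hni => ?_)).symm
    · simp only [Finset.mem_Ici] at *; exact le_trans hlj hi
    · simp only [Finset.mem_Ici, not_le] at hni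
      exact Dmat_of_lt hni
  have hIcij : ∑ i ∈ Finset.Ici j, Dmat n d i j
      = d j + ∑ i ∈ Finset.Ioi j, Dmat n d i j := by
    rw [Finset.Ici_eq_cons_Ioi, Finset.sum_cons, Dmat_diag]
  refine ⟨fun hlj hjn => ?_, fun hjl => ?_, fun hjn => ?_⟩
  · rw [hV, hsub hlj, hIcij]
    set j' : Fin n := ⟨(j : ℕ) + 1, hjn⟩ with hj'
    have hIoi : Finset.Ioi j = Finset.Ici j' := by
      ext i
      simp only [Finset.mem_Ioi, Finset.mem_Ici, Fin.le_def, Fin.lt_def, hj']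
      omega
    rw [hIoi, aux n hn d hdn j (n - 1 - j') j' le_rfl (by simp only [Fin.lt_def, hj']; omega)]
    have hempty : Finset.Ioo j j' = ∅ := by
      ext i
      simp only [Finset.mem_Ioo, Finset.notMem_empty, iff_false, Fin.lt_def, hj', not_and]
      omega
    rw [hempty, Finset.prod_empty]
    ring
  · rw [hV, aux n hn d hdn j (n - 1 - l) l le_rfl hjl]
  · have hj : j = ⟨n - 1, by omega⟩ := Fin.ext (show (j:ℕ) = n - 1 by omega)
    have hlj : l ≤ j := by
      rw [hj]
      exact Fin.le_def.mpr (by simp only [Fin.val_mk]; have := l.isLt; omega)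
    rw [hV, hsub hlj, hIcij]
    have hempty : Finset.Ioi j = ∅ := by
      ext i
      simp only [Finset.mem_Ioi, Finset.notMem_empty, iff_false, Fin.lt_def, not_lt]
      have := i.isLt; omega
    rw [hempty, Finset.sum_empty, hj, hdn]
    ring
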